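/- (Large disagreement falsifies one predictor.) Let f₁, f₂ : 𝒳 → [0,1]^d be predictors, let ℓ be a linear loss with vectors ℓ_a ∈ [0,1]^d, let α > 0, and let E = E^α_{ℓ,a₁,a₂}(f₁, f₂) be the disagreement event, i.e. the set of x such that π_ℓ^BR(f₁(x)) = a₁, π_ℓ^BR(f₂(x)) = a₂ with a₁ ≠ a₂, and either ⟨f₁(x), ℓ_{a₂} − ℓ_{a₁}⟩ > α or ⟨f₂(x), ℓ_{a₁} − ℓ_{a₂}⟩ > α. If μ(E) > 0, then for some i ∈ {1,2}, ‖E_{x}[f_i(x) − f*(x) | E]‖₂ ≥ α / (2√d). -/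

import Mathlib

open MeasureTheory
open scoped RealInnerProductSpace

lemma eucl_norm_le_sqrt_card {d : ℕ} (v : EuclideanSpace ℝ (Fin d))
    (hv : ∀ j, |v j| ≤ 1) : ‖v‖ ≤ Real.sqrt d := by
  rw [EuclideanSpace.norm_eq]
  apply Real.sqrt_le_sqrt
  calc ∑ j, ‖v j‖ ^ 2 ≤ ∑ j : Fin d, 1 := by
        apply Finset.sum_le_sum
        intro j _
        have := hv j
        have : ‖v j‖ ≤ 1 := by simpa [Real.norm_eq_abs] using this
        nlinarith [norm_nonneg (v j)]
    _ = d := by simp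

/-- Large disagreement falsifies one predictor.  If the disagreement
event `E = E^α_{ℓ,a₁,a₂}(f₁,f₂)` has positive mass under the marginal `μ = 𝒟.map fst`,
then for some `i ∈ {1,2}` the conditional mean prediction error of `f_i` on `E`
satisfies `‖E[f_i(x) - f*(x) | E]‖₂ ≥ α/(2√d)`, where `f*` is (a version of) the
conditional label expectation. -/
theorem large_disagreement_falsifies_a_predictor
    {X : Type*} [MeasurableSpace X] {d K : ℕ} (hd : 0 < d)
    (𝒟 : Measure (X × EuclideanSpace ℝ (Fin d))) [IsProbabilityMeasure 𝒟]
    (hY : ∀ᵐ p ∂𝒟, ∀ j, p.2 j ∈ Set.Icc (0 : ℝ) 1)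
    (f₁ f₂ : X → EuclideanSpace ℝ (Fin d))
    (hf₁_meas : Measurable f₁) (hf₂_meas : Measurable f₂)
    (hf₁_range : ∀ x j, f₁ x j ∈ Set.Icc (0 : ℝ) 1)
    (hf₂_range : ∀ x j, f₂ x j ∈ Set.Icc (0 : ℝ) 1)
    (fstar : X → EuclideanSpace ℝ (Fin d)) (hfstar_meas : Measurable fstar)
    (hfstar : (fun p : X × EuclideanSpace ℝ (Fin d) => fstar p.1)
      =ᵐ[𝒟] 𝒟[(fun p : X × EuclideanSpace ℝ (Fin d) => p.2) |
        MeasurableSpace.comap Prod.fst inferInstance])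
    (ℓ : Fin K → EuclideanSpace ℝ (Fin d)) (hℓ : ∀ a j, ℓ a j ∈ Set.Icc (0 : ℝ) 1)
    (π₁ π₂ : X → Fin K) (hπ₁_meas : Measurable π₁) (hπ₂_meas : Measurable π₂)
    (hπ₁ : ∀ x a, ⟪f₁ x, ℓ (π₁ x)⟫ ≤ ⟪f₁ x, ℓ a⟫)
    (hπ₂ : ∀ x a, ⟪f₂ x, ℓ (π₂ x)⟫ ≤ ⟪f₂ x, ℓ a⟫)
    (a₁ a₂ : Fin K) (hne : a₁ ≠ a₂) (α : ℝ) (hα : 0 < α)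
    (E : Set X)
    (hE : E = {x | π₁ x = a₁ ∧ π₂ x = a₂ ∧
      (α < ⟪f₁ x, ℓ a₂ - ℓ a₁⟫ ∨ α < ⟪f₂ x, ℓ a₁ - ℓ a₂⟫)})
    (hμE : 0 < (𝒟.map Prod.fst) E) :
    α / (2 * Real.sqrt d) ≤
        ‖((𝒟.map Prod.fst) E).toReal⁻¹ •
          ∫ x in E, (f₁ x - fstar x) ∂(𝒟.map Prod.fst)‖
    ∨ α / (2 * Real.sqrt d) ≤
        ‖((𝒟.map Prod.fst) E).toReal⁻¹ •
          ∫ x in E, (f₂ x - fstar x) ∂(𝒟.map Prod.fst)‖ := by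
  set μ : Measure X := 𝒟.map Prod.fst with hμ
  haveI : IsProbabilityMeasure μ := Measure.isProbabilityMeasure_map measurable_fst.aemeasurable
  set v : EuclideanSpace ℝ (Fin d) := ℓ a₂ - ℓ a₁ with hv
  -- measurability of E
  have hEmeas : MeasurableSet E := by
    rw [hE]
    have h1 : MeasurableSet {x | π₁ x = a₁} := hπ₁_meas (measurableSet_singleton a₁)
    have h2 : MeasurableSet {x | π₂ x = a₂} := hπ₂_meas (measurableSet_singleton a₂)
    have h3 : Measurable fun x => ⟪f₁ x, ℓ a₂ - ℓ a₁⟫ := hf₁_meas.inner measurable_const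
    have h4 : Measurable fun x => ⟪f₂ x, ℓ a₁ - ℓ a₂⟫ := hf₂_meas.inner measurable_const
    have hset : {x | π₁ x = a₁ ∧ π₂ x = a₂ ∧
        (α < ⟪f₁ x, ℓ a₂ - ℓ a₁⟫ ∨ α < ⟪f₂ x, ℓ a₁ - ℓ a₂⟫)} =
        {x | π₁ x = a₁} ∩ ({x | π₂ x = a₂} ∩
          ({x | α < ⟪f₁ x, ℓ a₂ - ℓ a₁⟫} ∪ {x | α < ⟪f₂ x, ℓ a₁ - ℓ a₂⟫})) := by
      ext x; simp [Set.mem_setOf_eq, and_assoc]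
    rw [hset]
    exact h1.inter (h2.inter ((measurableSet_lt measurable_const h3).union
      (measurableSet_lt measurable_const h4)))
  -- norm bounds
  have hnormf₁ : ∀ x, ‖f₁ x‖ ≤ Real.sqrt d := fun x =>
    eucl_norm_le_sqrt_card _ (fun j => abs_le.2 ⟨by linarith [(hf₁_range x j).1], (hf₁_range x j).2⟩)
  have hnormf₂ : ∀ x, ‖f₂ x‖ ≤ Real.sqrt d := fun x =>
    eucl_norm_le_sqrt_card _ (fun j => abs_le.2 ⟨by linarith [(hf₂_range x j).1], (hf₂_range x j).2⟩)
  have hnormv : ‖v‖ ≤ Real.sqrt d := by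
    apply eucl_norm_le_sqrt_card
    intro j
    have h1 := hℓ a₁ j; have h2 := hℓ a₂ j
    rw [abs_le]
    constructor <;> simp only [hv, PiLp.sub_apply] <;>
      [linarith [h1.2, h2.1]; linarith [h1.1, h2.2]]
  -- integrability
  have hi₁ : Integrable f₁ μ :=
    (integrable_const (Real.sqrt d)).mono' hf₁_meas.aestronglyMeasurable
      (Filter.Eventually.of_forall hnormf₁)
  have hi₂ : Integrable f₂ μ :=
    (integrable_const (Real.sqrt d)).mono' hf₂_meas.aestronglyMeasurable
      (Filter.Eventually.of_forall hnormf₂)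
  have histar : Integrable fstar μ := by
    have h𝒟 : Integrable (fun p : X × EuclideanSpace ℝ (Fin d) => fstar p.1) 𝒟 :=
      integrable_condExp.congr hfstar.symm
    rw [hμ, integrable_map_measure hfstar_meas.aestronglyMeasurable
      measurable_fst.aemeasurable]
    exact h𝒟
  have hiE₁ : IntegrableOn (fun x => f₁ x - fstar x) E μ := (hi₁.sub histar).integrableOn
  have hiE₂ : IntegrableOn (fun x => f₂ x - fstar x) E μ := (hi₂.sub histar).integrableOn
  have hiE₁₂ : IntegrableOn (fun x => f₁ x - f₂ x) E μ := (hi₁.sub hi₂).integrableOn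
  -- pointwise bound on E
  have hpt : ∀ x ∈ E, α ≤ ⟪f₁ x - f₂ x, v⟫ := by
    intro x hx
    rw [hE] at hx
    obtain ⟨h1, h2, h3⟩ := hx
    have ha : ⟪f₁ x, ℓ a₁⟫ ≤ ⟪f₁ x, ℓ a₂⟫ := by rw [← h1]; exact hπ₁ x a₂
    have hb : ⟪f₂ x, ℓ a₂⟫ ≤ ⟪f₂ x, ℓ a₁⟫ := by rw [← h2]; exact hπ₂ x a₁
    rw [inner_sub_left]
    rcases h3 with h3 | h3 <;>
      simp only [hv, inner_sub_right] at * <;> linarith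
  set m : ℝ := (μ E).toReal with hm
  have hmne : μ E ≠ ⊤ := (measure_lt_top μ E).ne
  have hmpos : 0 < m := ENNReal.toReal_pos hμE.ne' hmne
  -- integral bound
  have hib : α * m ≤ ⟪∫ x in E, (f₁ x - f₂ x) ∂μ, v⟫ := by
    have := setIntegral_ge_of_const_le_real hEmeas hmne
      (fun x hx => hpt x hx) (hiE₁₂.inner_const v)
    calc α * m ≤ ∫ x in E, ⟪f₁ x - f₂ x, v⟫ ∂μ := this
      _ = ⟪v, ∫ x in E, (f₁ x - f₂ x) ∂μ⟫ := by
          rw [← integral_inner hiE₁₂ v]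
          exact integral_congr_ae (Filter.Eventually.of_forall fun x => real_inner_comm _ _)
      _ = ⟪∫ x in E, (f₁ x - f₂ x) ∂μ, v⟫ := real_inner_comm _ _
  set I₁ := ∫ x in E, (f₁ x - fstar x) ∂μ with hI₁
  set I₂ := ∫ x in E, (f₂ x - fstar x) ∂μ with hI₂
  have hsplit : ∫ x in E, (f₁ x - f₂ x) ∂μ = I₁ - I₂ := by
    rw [hI₁, hI₂, integral_sub hi₁.integrableOn histar.integrableOn,
      integral_sub hi₂.integrableOn histar.integrableOn,
      integral_sub hi₁.integrableOn hi₂.integrableOn]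
    abel
  have hcs : ⟪I₁ - I₂, v⟫ ≤ (‖I₁‖ + ‖I₂‖) * Real.sqrt d := by
    calc ⟪I₁ - I₂, v⟫ ≤ ‖I₁ - I₂‖ * ‖v‖ := real_inner_le_norm _ _
      _ ≤ (‖I₁‖ + ‖I₂‖) * Real.sqrt d := by
          apply mul_le_mul (norm_sub_le _ _) hnormv (norm_nonneg _)
          positivity
  have hsd : 0 < Real.sqrt d := Real.sqrt_pos.2 (by exact_mod_cast hd)
  have hkey : α * m ≤ (‖I₁‖ + ‖I₂‖) * Real.sqrt d := by
    rw [hsplit] at hib; linarith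
  -- conclude
  have hmax : α * m / (2 * Real.sqrt d) ≤ ‖I₁‖ ∨ α * m / (2 * Real.sqrt d) ≤ ‖I₂‖ := by
    by_contra h
    push_neg at h
    have h1 := h.1; have h2 := h.2
    have : ‖I₁‖ + ‖I₂‖ < α * m / Real.sqrt d := by
      have : α * m / (2 * Real.sqrt d) + α * m / (2 * Real.sqrt d) = α * m / Real.sqrt d := by
        field_simp; ring
      linarith
    have := mul_lt_mul_of_pos_right this hsd
    rw [div_mul_cancel₀ _ hsd.ne'] at this
    linarith
  have conv : ∀ I : EuclideanSpace ℝ (Fin d), α * m / (2 * Real.sqrt d) ≤ ‖I‖ →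
      α / (2 * Real.sqrt d) ≤ ‖m⁻¹ • I‖ := by
    intro I h
    rw [norm_smul, norm_inv, Real.norm_eq_abs, abs_of_pos hmpos]
    calc α / (2 * Real.sqrt d) = m⁻¹ * (α * m / (2 * Real.sqrt d)) := by
          field_simp
      _ ≤ m⁻¹ * ‖I‖ := mul_le_mul_of_nonneg_left h (by positivity)
  rcases hmax with h | h
  · exact Or.inl (conv I₁ h)
  · exact Or.inr (conv I₂ h)
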